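/- Let (Ω, 𝓕, P) be a probability space with a filtration (𝓕_n)_{n≥0}, let (Y_n)_{n≥0} be an adapted sequence of integrable random variables taking values in the natural numbers ℕ, and suppose there is a constant c > 0 such that for every n, E[Y_{n+1} | 𝓕_n] ≤ Y_n − c·1_{{Y_n ≥ 1}} almost surely. Then almost surely there exists N such that Y_n = 0 for all n ≥ N. -/

import Mathlib

open MeasureTheory

theorem supermartingale_hits_zero {Ω : Type*} {m0 : MeasurableSpace Ω}
    (μ : Measure Ω) [IsProbabilityMeasure μ]
    (ℱ : Filtration ℕ m0)
    (Y : ℕ → Ω → ℕ)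
    (hadapted : ∀ n, StronglyMeasurable[ℱ n] (fun ω => (Y n ω : ℝ)))
    (hint : ∀ n, Integrable (fun ω => (Y n ω : ℝ)) μ)
    (c : ℝ) (hc : 0 < c)
    (hdec : ∀ n, ∀ᵐ ω ∂μ,
      (μ[fun ω' => (Y (n + 1) ω' : ℝ) | ℱ n]) ω
        ≤ (Y n ω : ℝ) - c * Set.indicator {ω' | 1 ≤ Y n ω'} (fun _ => (1:ℝ)) ω) :
    ∀ᵐ ω ∂μ, ∃ N : ℕ, ∀ n ≥ N, Y n ω = 0 := by
  set S : ℕ → Set Ω := fun n => {ω | 1 ≤ Y n ω} with hS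
  have hSmeas : ∀ n, MeasurableSet (S n) := by
    intro n
    have h1 : S n = (fun ω => (Y n ω : ℝ)) ⁻¹' (Set.Ici 1) := by
      ext ω
      simp [S, Nat.one_le_cast]
    rw [h1]
    exact ((hadapted n).mono (ℱ.le n)).measurable measurableSet_Ici
  have hInd : ∀ n, Integrable ((S n).indicator (fun _ => (1:ℝ))) μ := fun n =>
    (integrable_const (1:ℝ)).indicator (hSmeas n)
  have hstep : ∀ n, ∫ ω, (Y (n+1) ω : ℝ) ∂μ
      ≤ ∫ ω, (Y n ω : ℝ) ∂μ - c * (μ (S n)).toReal := by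
    intro n
    have hRHSint : Integrable
        (fun ω => (Y n ω : ℝ) - c * (S n).indicator (fun _ => (1:ℝ)) ω) μ :=
      (hint n).sub ((hInd n).const_mul c)
    calc ∫ ω, (Y (n+1) ω : ℝ) ∂μ
        = ∫ ω, (μ[fun ω' => (Y (n + 1) ω' : ℝ) | ℱ n]) ω ∂μ :=
          (integral_condExp (ℱ.le n)).symm
      _ ≤ ∫ ω, ((Y n ω : ℝ) - c * (S n).indicator (fun _ => (1:ℝ)) ω) ∂μ :=
          integral_mono_ae integrable_condExp hRHSint (hdec n)
      _ = ∫ ω, (Y n ω : ℝ) ∂μ - c * (μ (S n)).toReal := by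
          rw [integral_sub (hint n) ((hInd n).const_mul c), integral_const_mul,
            integral_indicator_const _ (hSmeas n)]
          simp [Measure.real]
  have hpos : ∀ n, 0 ≤ ∫ ω, (Y n ω : ℝ) ∂μ := fun n =>
    integral_nonneg fun ω => Nat.cast_nonneg _
  have key : ∀ N, ∫ ω, (Y N ω : ℝ) ∂μ + c * ∑ n ∈ Finset.range N, (μ (S n)).toReal
      ≤ ∫ ω, (Y 0 ω : ℝ) ∂μ := by
    intro N
    induction N with
    | zero => simp
    | succ N ih =>
      have h := hstep N
      rw [Finset.sum_range_succ]
      nlinarith [h, ih]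
  have hsum : ∀ N, ∑ n ∈ Finset.range N, (μ (S n)).toReal
      ≤ (∫ ω, (Y 0 ω : ℝ) ∂μ) / c := by
    intro N
    rw [le_div_iff₀ hc]
    have := key N
    have := hpos N
    linarith [this]
  have htsum : ∑' n, μ (S n) ≠ ⊤ := by
    have hb : ∀ N, ∑ n ∈ Finset.range N, μ (S n)
        ≤ ENNReal.ofReal ((∫ ω, (Y 0 ω : ℝ) ∂μ) / c) := by
      intro N
      have hfin : ∀ n ∈ Finset.range N, μ (S n) ≠ ⊤ := fun n _ => measure_ne_top μ _
      have hne : ∑ n ∈ Finset.range N, μ (S n) ≠ ⊤ := by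
        exact ENNReal.sum_ne_top.mpr hfin
      rw [ENNReal.le_ofReal_iff_toReal_le hne (by positivity)]
      rw [ENNReal.toReal_sum hfin]
      exact hsum N
    have : ∑' n, μ (S n) ≤ ENNReal.ofReal ((∫ ω, (Y 0 ω : ℝ) ∂μ) / c) := by
      rw [ENNReal.tsum_eq_iSup_sum]
      refine iSup_le fun s => ?_
      obtain ⟨N, hsub⟩ := s.exists_nat_subset_range
      exact le_trans (Finset.sum_le_sum_of_subset hsub) (hb N)
    exact ne_top_of_le_ne_top ENNReal.ofReal_ne_top this
  have hlimsup : μ (Filter.limsup S Filter.atTop) = 0 :=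
    measure_limsup_atTop_eq_zero htsum
  have hae : ∀ᵐ ω ∂μ, ω ∉ Filter.limsup S Filter.atTop :=
    measure_eq_zero_iff_ae_notMem.mp hlimsup
  filter_upwards [hae] with ω hω
  rw [Filter.mem_limsup_iff_frequently_mem, Filter.not_frequently] at hω
  rw [Filter.eventually_atTop] at hω
  obtain ⟨N, hN⟩ := hω
  exact ⟨N, fun n hn => by have := hN n hn; simp only [S, Set.mem_setOf_eq] at this; omega⟩
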